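/- Let G be a finite group, A a normal subgroup of G, p a prime, and H a Sylow p-subgroup of A. Then A is a perfect code of the pair (G,H) if and only if for every x ∈ G∖A with x² ∈ A there exists a ∈ A such that xa ∈ N_G(H) and (xa)² ∈ H. -/

import Mathlib

open scoped Pointwise

/-- A subset `C` of the vertices of a graph `Γ` is an `(r,s)`-regular set if every vertex
in `C` has exactly `r` neighbours in `C` and every vertex outside `C` has exactly `s`
neighbours in `C`. -/
def IsRegularVertexSet {V : Type*} (Γ : SimpleGraph V) (C : Set V) (r s : ℕ) : Prop :=
  (∀ v ∈ C, {w | w ∈ C ∧ Γ.Adj v w}.ncard = r) ∧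
  ∀ v ∉ C, {w | w ∈ C ∧ Γ.Adj v w}.ncard = s

/-- The coset graph `Cos(G,H,U)` on the left cosets of `H` in `G`:
`g₁H` and `g₂H` are adjacent iff `g₁⁻¹ g₂ ∈ U`. -/
def cosetGraph {G : Type*} [Group G] (H : Subgroup G) (U : Set G) : SimpleGraph (G ⧸ H) :=
  SimpleGraph.fromRel fun C D =>
    ∃ g₁ g₂ : G, QuotientGroup.mk g₁ = C ∧ QuotientGroup.mk g₂ = D ∧ g₁⁻¹ * g₂ ∈ U

/-- `U` is a valid connection set for a coset graph `Cos(G,H,U)`: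
inverse-closed, disjoint from `H`, and a union of double cosets of `H` (`HUH = U`). -/
def IsCosetGraphConnectionSet {G : Type*} [Group G] (H : Subgroup G) (U : Set G) : Prop :=
  U⁻¹ = U ∧ (H : Set G) ∩ U = ∅ ∧ (H : Set G) * U * (H : Set G) = U

/-- `A` is an `(r,s)`-regular set of the pair `(G,H)`: there is a coset graph
`Cos(G,H,U)` in which the set of left cosets of `H` in `A` is an `(r,s)`-regular set. -/
def IsRegularSetOfPair {G : Type*} [Group G] (H A : Subgroup G) (r s : ℕ) : Prop :=
  ∃ U : Set G, IsCosetGraphConnectionSet H U ∧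
    IsRegularVertexSet (cosetGraph H U)
      {C : G ⧸ H | ∃ a ∈ A, QuotientGroup.mk a = C} r s

/-- `A` is a perfect code of the pair `(G,H)` iff it is a `(0,1)`-regular set of `(G,H)`. -/
def IsPerfectCodeOfPair {G : Type*} [Group G] (H A : Subgroup G) : Prop :=
  IsRegularSetOfPair H A 0 1

/-- A subgroup `A` is an `(r,s)`-regular set of `G` iff it is an `(r,s)`-regular set of
the pair `(G,1)`, i.e. an `(r,s)`-regular set in some Cayley graph of `G`. -/
def IsRegularSetOfGroup {G : Type*} [Group G] (A : Subgroup G) (r s : ℕ) : Prop :=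
  IsRegularSetOfPair ⊥ A r s

/-- A subgroup `A` is a perfect code of `G` iff it is a `(0,1)`-regular set of `G`. -/
def IsPerfectCodeOfGroup {G : Type*} [Group G] (A : Subgroup G) : Prop :=
  IsRegularSetOfGroup A 0 1

/-- The conjugate subgroup `K^t = t⁻¹ K t`. -/
def conjSub {G : Type*} [Group G] (K : Subgroup G) (t : G) : Subgroup G :=
  K.map (MulAut.conj t⁻¹).toMonoidHom

section Aux
variable {G : Type*} [Group G]

lemma cosetGraph_adj_iff (H : Subgroup G) (U : Set G)
    (hU : IsCosetGraphConnectionSet H U) (x y : G) :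
    (cosetGraph H U).Adj (QuotientGroup.mk x) (QuotientGroup.mk y) ↔
      (QuotientGroup.mk x : G ⧸ H) ≠ QuotientGroup.mk y ∧ x⁻¹ * y ∈ U := by
  obtain ⟨hinv, -, hdc⟩ := hU
  rw [cosetGraph, SimpleGraph.fromRel_adj]
  constructor
  · rintro ⟨hne, h | h⟩
    · obtain ⟨g₁, g₂, h₁, h₂, hu⟩ := h
      refine ⟨hne, ?_⟩
      have e₁ : g₁⁻¹ * x ∈ H := QuotientGroup.eq.mp h₁
      have e₂ : g₂⁻¹ * y ∈ H := QuotientGroup.eq.mp h₂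
      have heq : x⁻¹ * y = (g₁⁻¹ * x)⁻¹ * (g₁⁻¹ * g₂) * (g₂⁻¹ * y) := by group
      rw [heq, ← hdc]
      exact Set.mul_mem_mul (Set.mul_mem_mul (H.inv_mem e₁) hu) e₂
    · obtain ⟨g₁, g₂, h₁, h₂, hu⟩ := h
      refine ⟨hne, ?_⟩
      have e₁ : g₁⁻¹ * y ∈ H := QuotientGroup.eq.mp h₁
      have e₂ : g₂⁻¹ * x ∈ H := QuotientGroup.eq.mp h₂
      have hyx : y⁻¹ * x ∈ U := by
        have heq : y⁻¹ * x = (g₁⁻¹ * y)⁻¹ * (g₁⁻¹ * g₂) * (g₂⁻¹ * x) := by group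
        rw [heq, ← hdc]
        exact Set.mul_mem_mul (Set.mul_mem_mul (H.inv_mem e₁) hu) e₂
      rw [← hinv]
      simpa using hyx
  · rintro ⟨hne, hu⟩
    exact ⟨hne, Or.inl ⟨x, y, rfl, rfl, hu⟩⟩

lemma mem_code_iff {H A : Subgroup G} (hHA : H ≤ A) (x : G) :
    (QuotientGroup.mk x : G ⧸ H) ∈ {C : G ⧸ H | ∃ a ∈ A, QuotientGroup.mk a = C} ↔ x ∈ A := by
  constructor
  · rintro ⟨a, ha, hax⟩
    have h1 : a⁻¹ * x ∈ H := QuotientGroup.eq.mp hax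
    have := mul_mem ha (hHA h1)
    simpa using this
  · exact fun hx => ⟨x, hx, rfl⟩

lemma mem_normalizer_of_conj [Finite G] {H : Subgroup G} {x : G}
    (h : ∀ n ∈ H, x * n * x⁻¹ ∈ H) : x ∈ (Subgroup.normalizer (H : Set G)) :=
  Subgroup.mem_normalizer_fintype h

end Aux

/-- **Corollary.** Let `A ⊴ G` and let `H` be a Sylow `p`-subgroup of `A`. Then `A` is a
perfect code of `(G,H)` iff for every `x ∈ G∖A` with `x² ∈ A` there exists `a ∈ A` such
that `xa ∈ N_G(H)` and `(xa)² ∈ H`. -/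
theorem corollary_sylow {G : Type*} [Group G] [Fintype G] (A : Subgroup G)
    (hAnG : A.Normal) (p : ℕ) (hp : p.Prime) (P : Sylow p ↥A) (H : Subgroup G)
    (hH : H = Subgroup.map A.subtype ↑P) :
    IsPerfectCodeOfPair H A ↔
      ∀ x : G, x ∉ A → x ^ 2 ∈ A →
        ∃ a ∈ A, x * a ∈ Subgroup.normalizer (H : Set G) ∧ (x * a) ^ 2 ∈ H := by
  haveI := hAnG
  haveI : Fact p.Prime := ⟨hp⟩
  have hHA : H ≤ A := hH ▸ Subgroup.map_subtype_le _
  have frattini : (Subgroup.normalizer (H : Set G)) ⊔ A = ⊤ := hH ▸ Sylow.normalizer_sup_eq_top P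
  constructor
  · -- forward direction
    rintro ⟨U, hU, _h0, h1⟩ x hxA hx2
    obtain ⟨hinv, hdisj, hdc⟩ := hU
    have hvD : (QuotientGroup.mk x : G ⧸ H) ∉
        {C : G ⧸ H | ∃ a ∈ A, QuotientGroup.mk a = C} :=
      fun h => hxA ((mem_code_iff hHA x).mp h)
    have hcard := h1 _ hvD
    rw [Set.ncard_eq_one] at hcard
    obtain ⟨w₀, hw₀⟩ := hcard
    have hw₀mem : w₀ ∈ {w | w ∈ {C : G ⧸ H | ∃ a ∈ A, QuotientGroup.mk a = C} ∧
        (cosetGraph H U).Adj (QuotientGroup.mk x) w} := hw₀ ▸ Set.mem_singleton w₀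
    obtain ⟨⟨b, hbA, hbw⟩, hadj⟩ := hw₀mem
    subst hbw
    have huU : x⁻¹ * b ∈ U :=
      ((cosetGraph_adj_iff H U ⟨hinv, hdisj, hdc⟩ x b).mp hadj).2
    set u := x⁻¹ * b with hu_def
    -- uniqueness helper
    have huniq : ∀ b' : G, b' ∈ A → x⁻¹ * b' ∈ U →
        (QuotientGroup.mk b' : G ⧸ H) = QuotientGroup.mk b := by
      intro b' hb'A hb'U
      have hne : (QuotientGroup.mk x : G ⧸ H) ≠ QuotientGroup.mk b' := by
        intro heq
        have hH' : x⁻¹ * b' ∈ H := QuotientGroup.eq.mp heq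
        have : x⁻¹ * b' ∈ (H : Set G) ∩ U := ⟨hH', hb'U⟩
        rw [hdisj] at this
        exact this
      have hadj' : (cosetGraph H U).Adj (QuotientGroup.mk x) (QuotientGroup.mk b') :=
        (cosetGraph_adj_iff H U ⟨hinv, hdisj, hdc⟩ x b').mpr ⟨hne, hb'U⟩
      have : (QuotientGroup.mk b' : G ⧸ H) ∈ ({QuotientGroup.mk b} : Set (G ⧸ H)) :=
        hw₀ ▸ ⟨⟨b', hb'A, rfl⟩, hadj'⟩
      exact this
    -- u is in the normalizer
    have key : ∀ h ∈ H, u⁻¹ * h * u ∈ H := by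
      intro h hh
      have hb' : x * h⁻¹ * u ∈ A := by
        have : x * h⁻¹ * u = (x * h⁻¹ * x⁻¹) * b := by rw [hu_def]; group
        rw [this]
        exact mul_mem (hAnG.conj_mem _ (hHA (H.inv_mem hh)) x) hbA
      have hmemU : x⁻¹ * (x * h⁻¹ * u) ∈ U := by
        have heq : x⁻¹ * (x * h⁻¹ * u) = h⁻¹ * u * 1 := by group
        rw [heq, ← hdc]
        exact Set.mul_mem_mul (Set.mul_mem_mul (H.inv_mem hh) huU) H.one_mem
      have := huniq _ hb' hmemU
      have hmem : (x * h⁻¹ * u)⁻¹ * b ∈ H := QuotientGroup.eq.mp this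
      have heq : (x * h⁻¹ * u)⁻¹ * b = u⁻¹ * h * (x⁻¹ * b) := by group
      rw [heq, ← hu_def] at hmem
      exact hmem
    have huN : u ∈ (Subgroup.normalizer (H : Set G)) := by
      have hinvN : u⁻¹ ∈ (Subgroup.normalizer (H : Set G)) := by
        apply mem_normalizer_of_conj
        intro n hn
        have := key n hn
        simpa using this
      simpa using (Subgroup.normalizer (H : Set G)).inv_mem hinvN
    -- u² ∈ H
    have hu2 : u * u ∈ H := by
      have hb2A : x * u⁻¹ ∈ A := by
        have : x * u⁻¹ = x ^ 2 * (x⁻¹ * b⁻¹ * x) := by rw [hu_def]; group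
        rw [this]
        exact mul_mem hx2 (by simpa using hAnG.conj_mem _ (A.inv_mem hbA) x⁻¹)
      have hmemU : x⁻¹ * (x * u⁻¹) ∈ U := by
        have heq : x⁻¹ * (x * u⁻¹) = u⁻¹ := by group
        rw [heq, ← hinv]
        simpa using huU
      have := huniq _ hb2A hmemU
      have hmem : (x * u⁻¹)⁻¹ * b ∈ H := QuotientGroup.eq.mp this
      have heq : (x * u⁻¹)⁻¹ * b = u * (x⁻¹ * b) := by group
      rw [heq, ← hu_def] at hmem
      exact hmem
    refine ⟨x⁻¹ * b⁻¹ * x, ?_, ?_, ?_⟩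
    · simpa using hAnG.conj_mem _ (A.inv_mem hbA) x⁻¹
    · have : x * (x⁻¹ * b⁻¹ * x) = u⁻¹ := by rw [hu_def]; group
      rw [this]
      exact (Subgroup.normalizer (H : Set G)).inv_mem huN
    · have : (x * (x⁻¹ * b⁻¹ * x)) ^ 2 = (u * u)⁻¹ := by rw [hu_def, pow_two]; group
      rw [this]
      exact H.inv_mem hu2
  · -- backward direction
    intro hcond
    letI : LinearOrder (G ⧸ A) := @linearOrderOfSTO _ WellOrderingRel _ (Classical.decRel _)
    have exists_u : ∀ q : G ⧸ A, q ≠ 1 → ∃ u : G, (QuotientGroup.mk u : G ⧸ A) = q ∧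
        u ∈ (Subgroup.normalizer (H : Set G)) ∧ (q * q = 1 → u ^ 2 ∈ H) := by
      intro q hq
      obtain ⟨x, rfl⟩ := QuotientGroup.mk_surjective q
      have hxA : x ∉ A := fun h => hq ((QuotientGroup.eq_one_iff x).mpr h)
      by_cases hsq : (QuotientGroup.mk x : G ⧸ A) * QuotientGroup.mk x = 1
      · have hx2 : x ^ 2 ∈ A := by
          rw [← QuotientGroup.eq_one_iff (x ^ 2)]
          rw [pow_two, QuotientGroup.mk_mul]
          exact hsq
        obtain ⟨a, haA, hN, hH2⟩ := hcond x hxA hx2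
        refine ⟨x * a, ?_, hN, fun _ => hH2⟩
        rw [QuotientGroup.mk_mul, (QuotientGroup.eq_one_iff a).mpr haA, mul_one]
      · have hx : x ∈ (Subgroup.normalizer (H : Set G)) ⊔ A := frattini ▸ Subgroup.mem_top x
        rw [← SetLike.mem_coe, Subgroup.mul_normal] at hx
        obtain ⟨n, hn, a, ha, rfl⟩ := hx
        refine ⟨n, ?_, hn, fun h => absurd h hsq⟩
        rw [QuotientGroup.mk_mul, (QuotientGroup.eq_one_iff a).mpr ha, mul_one]
    set f : (G ⧸ A) → G := fun q =>
      if h : q = 1 then 1 else Classical.choose (exists_u q h) with hf_def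
    have hf : ∀ q : G ⧸ A, q ≠ 1 → (QuotientGroup.mk (f q) : G ⧸ A) = q ∧
        f q ∈ (Subgroup.normalizer (H : Set G)) ∧ (q * q = 1 → (f q) ^ 2 ∈ H) := by
      intro q hq
      simp only [hf_def, dif_neg hq]
      exact Classical.choose_spec (exists_u q hq)
    set g : (G ⧸ A) → G := fun q => if q⁻¹ < q then (f q⁻¹)⁻¹ else f q with hg_def
    have hg_mk : ∀ q : G ⧸ A, q ≠ 1 → (QuotientGroup.mk (g q) : G ⧸ A) = q := by
      intro q hq
      simp only [hg_def]
      split_ifs with h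
      · rw [QuotientGroup.mk_inv, (hf q⁻¹ (inv_ne_one.mpr hq)).1, inv_inv]
      · exact (hf q hq).1
    have hg_N : ∀ q : G ⧸ A, q ≠ 1 → g q ∈ (Subgroup.normalizer (H : Set G)) := by
      intro q hq
      simp only [hg_def]
      split_ifs with h
      · exact (Subgroup.normalizer (H : Set G)).inv_mem (hf q⁻¹ (inv_ne_one.mpr hq)).2.1
      · exact (hf q hq).2.1
    have hg_symm : ∀ q : G ⧸ A, q ≠ 1 → g q * g q⁻¹ ∈ H := by
      intro q hq
      rcases lt_trichotomy q⁻¹ q with h | h | h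
      · have h1 : g q = (f q⁻¹)⁻¹ := by simp only [hg_def]; rw [if_pos h]
        have h2 : g q⁻¹ = f q⁻¹ := by
          simp only [hg_def]
          rw [if_neg]
          rw [inv_inv]
          exact fun h' => absurd h' (asymm h)
        rw [h1, h2, inv_mul_cancel]
        exact H.one_mem
      · have h1 : g q = f q := by
          simp only [hg_def]
          rw [if_neg (by rw [h]; exact lt_irrefl q)]
        have h2 : g q⁻¹ = g q := by rw [h]
        rw [h2, h1, ← pow_two]
        refine (hf q hq).2.2 ?_
        nth_rewrite 1 [← h]
        exact inv_mul_cancel q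
      · have h1 : g q = f q := by simp only [hg_def]; rw [if_neg (fun h' => absurd h' (asymm h))]
        have h2 : g q⁻¹ = (f q)⁻¹ := by
          simp only [hg_def]
          rw [inv_inv, if_pos h]
        rw [h1, h2, mul_inv_cancel]
        exact H.one_mem
    -- the connection set
    set U : Set G := {u : G | (QuotientGroup.mk u : G ⧸ A) ≠ 1 ∧
      (g (QuotientGroup.mk u))⁻¹ * u ∈ H} with hU_def
    have hUA : ∀ u ∈ U, u ∉ A := fun u hu h => hu.1 ((QuotientGroup.eq_one_iff u).mpr h)
    have hUinv_mem : ∀ u ∈ U, u⁻¹ ∈ U := by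
      rintro u ⟨hq, hh⟩
      set q : G ⧸ A := QuotientGroup.mk u with hq_def
      have hmkinv : (QuotientGroup.mk u⁻¹ : G ⧸ A) = q⁻¹ := by rw [QuotientGroup.mk_inv, hq_def]
      refine ⟨by rw [hmkinv]; exact inv_ne_one.mpr hq, ?_⟩
      rw [hmkinv]
      have hN := hg_N q hq
      have hconj : g q * ((g q)⁻¹ * u)⁻¹ * (g q)⁻¹ ∈ H :=
        (Subgroup.mem_normalizer_iff.mp hN _).mp (H.inv_mem hh)
      have hsym := hg_symm q hq
      have heq : (g q⁻¹)⁻¹ * u⁻¹ =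
          (g q * g q⁻¹)⁻¹ * (g q * ((g q)⁻¹ * u)⁻¹ * (g q)⁻¹) := by group
      rw [heq]
      exact mul_mem (H.inv_mem hsym) hconj
    have hUinv : U⁻¹ = U := by
      ext u
      constructor
      · intro hu
        have : u⁻¹ ∈ U := hu
        simpa using hUinv_mem _ this
      · intro hu
        exact hUinv_mem u hu
    have hdisj : (H : Set G) ∩ U = ∅ := by
      ext u
      simp only [Set.mem_inter_iff, Set.mem_empty_iff_false, iff_false, not_and]
      intro h hu
      exact hUA u hu (hHA h)
    have hdcU : (H : Set G) * U * (H : Set G) = U := by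
      apply Set.Subset.antisymm
      · rintro w hw
        rw [Set.mem_mul] at hw
        obtain ⟨v, hv, h₂, hh₂, rfl⟩ := hw
        rw [Set.mem_mul] at hv
        obtain ⟨h₁, hh₁, u, hu, rfl⟩ := hv
        obtain ⟨hq, hh⟩ := hu
        set q : G ⧸ A := QuotientGroup.mk u with hq_def
        have hmk : (QuotientGroup.mk (h₁ * u * h₂) : G ⧸ A) = q := by
          rw [QuotientGroup.mk_mul, QuotientGroup.mk_mul,
            (QuotientGroup.eq_one_iff h₁).mpr (hHA hh₁),
            (QuotientGroup.eq_one_iff h₂).mpr (hHA hh₂), one_mul, mul_one]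
        refine ⟨by rw [hmk]; exact hq, ?_⟩
        rw [hmk]
        have hN := hg_N q hq
        have hconj : (g q)⁻¹ * h₁ * ((g q)⁻¹)⁻¹ ∈ H :=
          (Subgroup.mem_normalizer_iff.mp ((Subgroup.normalizer (H : Set G)).inv_mem hN) _).mp hh₁
        have heq : (g q)⁻¹ * (h₁ * u * h₂) =
            ((g q)⁻¹ * h₁ * ((g q)⁻¹)⁻¹) * ((g q)⁻¹ * u) * h₂ := by group
        rw [heq]
        exact mul_mem (mul_mem hconj hh) hh₂
      · intro u hu
        have h1 : (1 : G) ∈ (H : Set G) := H.one_mem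
        have := Set.mul_mem_mul (Set.mul_mem_mul h1 hu) h1
        simpa using this
    -- regularity
    refine ⟨U, ⟨hUinv, hdisj, hdcU⟩, ?_, ?_⟩
    · -- r = 0
      rintro v ⟨a, haA, rfl⟩
      rw [Set.ncard_eq_zero (Set.toFinite _)]
      ext w
      simp only [Set.mem_setOf_eq, Set.mem_empty_iff_false, iff_false, not_and]
      rintro ⟨b, hbA, rfl⟩ hadj
      have hu : a⁻¹ * b ∈ U :=
        ((cosetGraph_adj_iff H U ⟨hUinv, hdisj, hdcU⟩ a b).mp hadj).2
      exact hUA _ hu (mul_mem (A.inv_mem haA) hbA)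
    · -- s = 1
      intro v hv
      obtain ⟨x, rfl⟩ := QuotientGroup.mk_surjective v
      have hxA : x ∉ A := fun h => hv ((mem_code_iff hHA x).mpr h)
      set q : G ⧸ A := (QuotientGroup.mk x)⁻¹ with hq_def
      have hq1 : q ≠ 1 := by
        rw [hq_def, inv_ne_one]
        exact fun h => hxA ((QuotientGroup.eq_one_iff x).mp h)
      rw [Set.ncard_eq_one]
      refine ⟨QuotientGroup.mk (x * g q), ?_⟩
      ext w
      simp only [Set.mem_setOf_eq, Set.mem_singleton_iff]
      constructor
      · rintro ⟨⟨b, hbA, rfl⟩, hadj⟩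
        have hu : x⁻¹ * b ∈ U :=
          ((cosetGraph_adj_iff H U ⟨hUinv, hdisj, hdcU⟩ x b).mp hadj).2
        have hmku : (QuotientGroup.mk (x⁻¹ * b) : G ⧸ A) = q := by
          rw [QuotientGroup.mk_mul, QuotientGroup.mk_inv,
            (QuotientGroup.eq_one_iff b).mpr hbA, mul_one, hq_def]
        have hh : (g q)⁻¹ * (x⁻¹ * b) ∈ H := by
          have := hu.2
          rwa [hmku] at this
        symm
        rw [QuotientGroup.eq]
        have heq : (x * g q)⁻¹ * b = (g q)⁻¹ * (x⁻¹ * b) := by group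
        rw [heq]
        exact hh
      · rintro rfl
        have hmkgq : (QuotientGroup.mk (g q) : G ⧸ A) = q := hg_mk q hq1
        have hgqA : g q ∉ A := by
          intro h
          exact hq1 (hmkgq ▸ (QuotientGroup.eq_one_iff (g q)).mpr h)
        have hbA : x * g q ∈ A := by
          rw [← QuotientGroup.eq_one_iff (x * g q), QuotientGroup.mk_mul, hmkgq, hq_def,
            mul_inv_cancel]
        refine ⟨⟨x * g q, hbA, rfl⟩, ?_⟩
        rw [cosetGraph_adj_iff H U ⟨hUinv, hdisj, hdcU⟩]
        constructor
        · intro heq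
          have : x⁻¹ * (x * g q) ∈ H := QuotientGroup.eq.mp heq
          rw [inv_mul_cancel_left] at this
          exact hgqA (hHA this)
        · have heq : x⁻¹ * (x * g q) = g q := by group
          rw [heq]
          refine ⟨by rw [hmkgq]; exact hq1, ?_⟩
          rw [hmkgq, inv_mul_cancel]
          exact H.one_mem
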